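/- Every monetary risk measure ρ on L^∞(P) admits the representation ρ(X) = min over Z ∈ 𝒜_ρ of sup over Q ∈ 𝓜₁(P) of (E_Q[−X] − E_Q[−Z]), for all X ∈ L^∞(P). -/

import Mathlib

open MeasureTheory ProbabilityTheory Filter Set

/-- `X` belongs to `L^∞(P)`: measurable and essentially bounded. -/
def MemLinf {Ω : Type*} [MeasurableSpace Ω] (P : Measure Ω) (X : Ω → ℝ) : Prop :=
  Measurable X ∧ ∃ C : ℝ, ∀ᵐ ω ∂P, |X ω| ≤ C

lemma memLinf_integrable {Ω : Type*} [MeasurableSpace Ω] {P Q : Measure Ω}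
    [IsFiniteMeasure Q] (hQP : Q ≪ P) {X : Ω → ℝ} (hm : Measurable X) {C : ℝ}
    (hb : ∀ᵐ ω ∂P, |X ω| ≤ C) : Integrable X Q := by
  refine Integrable.mono' (integrable_const C) hm.aestronglyMeasurable ?_
  filter_upwards [hQP.ae_le hb] with ω h using h

/-- Every monetary risk measure admits the representation
`ρ(X) = min_{Z ∈ 𝒜_ρ} sup_{Q ∈ 𝓜₁(P)} (E_Q[−X] − E_Q[−Z])`, the minimum being attained. -/
theorem stmt10 {Ω : Type*} [MeasurableSpace Ω] (P : Measure Ω) [IsProbabilityMeasure P]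
    (ρ : (Ω → ℝ) → ℝ)
    (hmono : ∀ X Y : Ω → ℝ, MemLinf P X → MemLinf P Y →
      (∀ᵐ ω ∂P, X ω ≤ Y ω) → ρ Y ≤ ρ X)
    (hTI : ∀ X : Ω → ℝ, MemLinf P X → ∀ m : ℝ, ρ (fun ω => X ω + m) = ρ X - m)
    (X : Ω → ℝ) (hX : MemLinf P X) :
    IsLeast {r : ℝ | ∃ Z : Ω → ℝ, MemLinf P Z ∧ ρ Z ≤ 0 ∧
        r = sSup {s : ℝ | ∃ Q : Measure Ω, IsProbabilityMeasure Q ∧ Q ≪ P ∧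
          s = (∫ ω, -X ω ∂Q) - ∫ ω, -Z ω ∂Q}}
      (ρ X) := by
  obtain ⟨hXm, CX, hCX⟩ := hX
  constructor
  · -- Membership : take Z = X + ρ X
    refine ⟨fun ω => X ω + ρ X, ⟨hXm.add_const _, CX + |ρ X|, ?_⟩, ?_, ?_⟩
    · filter_upwards [hCX] with ω h
      calc |X ω + ρ X| ≤ |X ω| + |ρ X| := abs_add_le _ _
        _ ≤ CX + |ρ X| := by linarith
    · rw [hTI X ⟨hXm, CX, hCX⟩ (ρ X)]; simp
    · have hset : {s : ℝ | ∃ Q : Measure Ω, IsProbabilityMeasure Q ∧ Q ≪ P ∧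
          s = (∫ ω, -X ω ∂Q) - ∫ ω, -(X ω + ρ X) ∂Q} = {ρ X} := by
        ext s
        simp only [Set.mem_setOf_eq, Set.mem_singleton_iff]
        constructor
        · rintro ⟨Q, hQprob, hQP, rfl⟩
          have hint : Integrable (fun ω => -X ω) Q :=
            memLinf_integrable hQP hXm.neg (by filter_upwards [hCX] with ω h; simpa using h)
          have : ∫ ω, -(X ω + ρ X) ∂Q = (∫ ω, -X ω ∂Q) + (-ρ X) := by
            simp_rw [neg_add]
            rw [integral_add hint (integrable_const _), integral_const]
            simp
          rw [this]; ring
        · rintro rfl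
          refine ⟨P, inferInstance, Measure.AbsolutelyContinuous.rfl, ?_⟩
          have hint : Integrable (fun ω => -X ω) P :=
            memLinf_integrable Measure.AbsolutelyContinuous.rfl hXm.neg
              (by filter_upwards [hCX] with ω h; simpa using h)
          have : ∫ ω, -(X ω + ρ X) ∂P = (∫ ω, -X ω ∂P) + (-ρ X) := by
            simp_rw [neg_add]
            rw [integral_add hint (integrable_const _), integral_const]
            simp
          rw [this]; ring
      rw [hset, csSup_singleton]
  · -- lower bound
    rintro r ⟨Z, ⟨hZm, CZ, hCZ⟩, hρZ, rfl⟩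
    set S : Set ℝ := {s : ℝ | ∃ Q : Measure Ω, IsProbabilityMeasure Q ∧ Q ≪ P ∧
        s = (∫ ω, -X ω ∂Q) - ∫ ω, -Z ω ∂Q} with hS
    set f : Ω → ℝ := fun ω => Z ω - X ω with hf
    have hfm : Measurable f := hZm.sub hXm
    have hfb : ∀ᵐ ω ∂P, |f ω| ≤ CZ + CX := by
      filter_upwards [hCX, hCZ] with ω h1 h2
      calc |f ω| ≤ |Z ω| + |X ω| := abs_sub _ _
        _ ≤ CZ + CX := by linarith
    -- every element of S is an expectation of f
    have hSf : ∀ s ∈ S, ∃ Q : Measure Ω, IsProbabilityMeasure Q ∧ Q ≪ P ∧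
        s = ∫ ω, f ω ∂Q := by
      rintro s ⟨Q, hQprob, hQP, rfl⟩
      refine ⟨Q, hQprob, hQP, ?_⟩
      have hiX : Integrable (fun ω => -X ω) Q :=
        memLinf_integrable hQP hXm.neg (by filter_upwards [hCX] with ω h; simpa using h)
      have hiZ : Integrable (fun ω => -Z ω) Q :=
        memLinf_integrable hQP hZm.neg (by filter_upwards [hCZ] with ω h; simpa using h)
      rw [← integral_sub hiX hiZ]
      congr 1 with ω
      simp [hf]; ring
    -- S is nonempty
    have hSne : S.Nonempty := by
      refine ⟨(∫ ω, -X ω ∂P) - ∫ ω, -Z ω ∂P, P, inferInstance,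
        Measure.AbsolutelyContinuous.rfl, rfl⟩
    -- S is bounded above
    have hSbdd : BddAbove S := by
      refine ⟨CZ + CX, fun s hs => ?_⟩
      obtain ⟨Q, hQprob, hQP, rfl⟩ := hSf s hs
      have hif : Integrable f Q := memLinf_integrable hQP hfm hfb
      calc ∫ ω, f ω ∂Q ≤ ∫ _, (CZ + CX) ∂Q := by
            refine integral_mono_ae hif (integrable_const _) ?_
            filter_upwards [hQP.ae_le hfb] with ω h using le_of_abs_le h
        _ = CZ + CX := by simp
    set m : ℝ := sSup S with hm
    -- key claim : f ≤ m a.e.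
    have hkey : ∀ᵐ ω ∂P, f ω ≤ m := by
      by_contra hcon
      have hpos : P {ω | m < f ω} ≠ 0 := by
        intro h0
        refine hcon (ae_iff.2 ?_)
        simpa [not_le] using h0
      have hUnion : {ω | m < f ω} ⊆ ⋃ n : ℕ, {ω | m + 1 / (n + 1) ≤ f ω} := by
        intro ω hω
        obtain ⟨n, hn⟩ := exists_nat_one_div_lt (K := ℝ) (sub_pos.2 hω)
        exact Set.mem_iUnion.2 ⟨n, by simp only [Set.mem_setOf_eq]; linarith⟩
      have : ∃ n : ℕ, P {ω | m + 1 / (n + 1) ≤ f ω} ≠ 0 := by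
        by_contra hall
        push_neg at hall
        exact hpos (measure_mono_null hUnion (by
          simpa using measure_iUnion_null_iff.2 hall))
      obtain ⟨n, hn⟩ := this
      set ε : ℝ := 1 / (n + 1) with hε
      have hεpos : (0:ℝ) < ε := by positivity
      set A : Set Ω := {ω | m + ε ≤ f ω} with hA
      have hAmeas : MeasurableSet A := measurableSet_le measurable_const hfm
      set Q : Measure Ω := P[|A] with hQ
      haveI hQprob : IsProbabilityMeasure Q := cond_isProbabilityMeasure hn
      have hQP : Q ≪ P := cond_absolutelyContinuous
      have hmemA : ∀ᵐ ω ∂Q, ω ∈ A := by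
        rw [ae_iff]
        have : Q Aᶜ = 0 := by
          rw [hQ, cond_apply hAmeas]
          simp
        exact this
      have hif : Integrable f Q := memLinf_integrable hQP hfm hfb
      have hlb : m + ε ≤ ∫ ω, f ω ∂Q := by
        calc m + ε = ∫ _, (m + ε) ∂Q := by simp
          _ ≤ ∫ ω, f ω ∂Q := by
            refine integral_mono_ae (integrable_const _) hif ?_
            filter_upwards [hmemA] with ω h using h
      have hmem : (∫ ω, f ω ∂Q) ∈ S := by
        have hiX : Integrable (fun ω => -X ω) Q :=
          memLinf_integrable hQP hXm.neg (by filter_upwards [hCX] with ω h; simpa using h)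
        have hiZ : Integrable (fun ω => -Z ω) Q :=
          memLinf_integrable hQP hZm.neg (by filter_upwards [hCZ] with ω h; simpa using h)
        refine ⟨Q, hQprob, hQP, ?_⟩
        rw [← integral_sub hiX hiZ]
        congr 1 with ω
        simp [hf]; ring
      have := le_csSup hSbdd hmem
      rw [← hm] at this
      linarith
    -- conclude : ρ X ≤ m
    have hmono' : ρ X ≤ ρ (fun ω => Z ω + (-m)) := by
      refine hmono (fun ω => Z ω + (-m)) X
        ⟨hZm.add_const _, CZ + |m|, ?_⟩ ⟨hXm, CX, hCX⟩ ?_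
      · filter_upwards [hCZ] with ω h
        calc |Z ω + (-m)| ≤ |Z ω| + |(-m)| := abs_add_le _ _
          _ ≤ CZ + |m| := by simp; linarith
      · filter_upwards [hkey] with ω h
        simp only [hf] at h
        linarith
    rw [hTI Z ⟨hZm, CZ, hCZ⟩ (-m)] at hmono'
    simpa using hmono'.trans (by linarith)
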